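/- Let f, g, λ : [a,b] → ℝ and h : [a,b] → ℂ be continuous, with λ(t) an eigenvalue of the Hermitian matrix A(t) = [[f(t), h(t)], [h̄(t), g(t)]] for each t, and suppose A(t) has distinct eigenvalues for all t. If (tₙ) is a monotone increasing sequence in [a,b] such that for each n, f(tₙ) = λ(tₙ) or g(tₙ) = λ(tₙ), and these alternate (f(tₙ) = λ(tₙ) implies g(tₙ₊₁) = λ(tₙ₊₁) and vice versa), then (tₙ) cannot converge to a point of [a,b]; hence no such infinite sequence exists. -/

import Mathlib

open Matrix Set

theorem no_infinite_alternating_sequence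
    (a b : ℝ) (f g lam : ℝ → ℝ) (h : ℝ → ℂ)
    (hf : ContinuousOn f (Icc a b)) (hg : ContinuousOn g (Icc a b))
    (hh : ContinuousOn h (Icc a b)) (hlam : ContinuousOn lam (Icc a b))
    (A : ℝ → Matrix (Fin 2) (Fin 2) ℂ)
    (hA : ∀ t, A t = !![(f t : ℂ), h t; star (h t), (g t : ℂ)])
    (heig : ∀ t ∈ Icc a b,
      det (((lam t : ℝ) : ℂ) • (1 : Matrix (Fin 2) (Fin 2) ℂ) - A t) = 0)
    (hdist : ∀ t ∈ Icc a b, (f t - g t) ^ 2 + 4 * ‖h t‖ ^ 2 ≠ 0)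
    (t : ℕ → ℝ) (hmono : Monotone t) (hmem : ∀ n, t n ∈ Icc a b)
    (halt₀ : ∀ n, f (t n) = lam (t n) ∨ g (t n) = lam (t n))
    (halt₁ : ∀ n, f (t n) = lam (t n) → g (t (n + 1)) = lam (t (n + 1)))
    (halt₂ : ∀ n, g (t n) = lam (t n) → f (t (n + 1)) = lam (t (n + 1))) :
    False := by
  have hbdd : BddAbove (Set.range t) := ⟨b, by rintro x ⟨n, rfl⟩; exact (hmem n).2⟩
  set c := ⨆ n, t n with hc
  have htc : Filter.Tendsto t Filter.atTop (nhds c) := tendsto_atTop_ciSup hmono hbdd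
  have hcmem : c ∈ Icc a b :=
    ⟨le_trans (hmem 0).1 (le_ciSup hbdd 0), ciSup_le fun n => (hmem n).2⟩
  have htc' : Filter.Tendsto t Filter.atTop (nhdsWithin c (Icc a b)) :=
    tendsto_nhdsWithin_of_tendsto_nhds_of_eventually_within t htc
      (Filter.Eventually.of_forall hmem)
  have hfL : Filter.Tendsto (fun n => f (t n) - lam (t n)) Filter.atTop
      (nhds (f c - lam c)) := ((hf.sub hlam) c hcmem).tendsto.comp htc'
  have hgL : Filter.Tendsto (fun n => g (t n) - lam (t n)) Filter.atTop
      (nhds (g c - lam c)) := ((hg.sub hlam) c hcmem).tendsto.comp htc'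
  have hfreqf : ∃ᶠ n in Filter.atTop, f (t n) - lam (t n) = (fun _ => (0:ℝ)) n := by
    rw [Filter.frequently_atTop]
    intro n
    rcases halt₀ n with h1 | h1
    · exact ⟨n, le_refl n, by simp [h1]⟩
    · exact ⟨n + 1, Nat.le_succ n, by simp [halt₂ n h1]⟩
  have hfreqg : ∃ᶠ n in Filter.atTop, g (t n) - lam (t n) = (fun _ => (0:ℝ)) n := by
    rw [Filter.frequently_atTop]
    intro n
    rcases halt₀ n with h1 | h1
    · exact ⟨n + 1, Nat.le_succ n, by simp [halt₁ n h1]⟩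
    · exact ⟨n, le_refl n, by simp [h1]⟩
  have hf0 : f c - lam c = 0 :=
    tendsto_nhds_unique_of_frequently_eq hfL tendsto_const_nhds hfreqf
  have hg0 : g c - lam c = 0 :=
    tendsto_nhds_unique_of_frequently_eq hgL tendsto_const_nhds hfreqg
  have hfc : f c = lam c := by linarith
  have hgc : g c = lam c := by linarith
  have hd := heig c hcmem
  rw [hA c] at hd
  have hrw : ((lam c : ℝ) : ℂ) • (1 : Matrix (Fin 2) (Fin 2) ℂ) -
      !![(f c : ℂ), h c; star (h c), (g c : ℂ)]
      = !![((lam c : ℂ) - f c), -h c; -(star (h c)), (lam c : ℂ) - g c] := by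
    ext i j
    fin_cases i <;> fin_cases j <;>
      simp [Matrix.smul_apply, Matrix.one_apply]
  rw [hrw, Matrix.det_fin_two_of, hfc, hgc] at hd
  simp only [sub_self, zero_mul, neg_mul_neg, zero_sub, neg_eq_zero, mul_eq_zero,
    star_eq_zero, or_self] at hd
  exact hdist c hcmem (by simp [hfc, hgc, hd])
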